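/- Let Z be a proper geodesic δ-hyperbolic space, x ∈ Z, r > 0, and let y, z ∈ Z satisfy d(x,y) < r − 10δ and d(x,z) < r − 10δ. Let σ, σ': [0,∞) → Z be geodesic rays with σ(0) = σ'(0) = x and extended Gromov product ⟨σ(∞), σ'(∞)⟩_x > r. Then |β_σ(y,z) − β_{σ'}(y,z)| ≤ 72δ. -/
import Mathlib


open Filter Metric Set

noncomputable def gromovProd {Z : Type*} [MetricSpace Z] (x y z : Z) : ℝ :=
  (dist x y + dist x z - dist y z) / 2

/-- `Z` is δ-hyperbolic in the Gromov product sense. -/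
def IsDeltaHyperbolic (Z : Type*) [MetricSpace Z] (δ : ℝ) : Prop :=
  ∀ w x y z : Z, min (gromovProd x w y) (gromovProd x y z) - δ ≤ gromovProd x w z

/-- `f` parametrizes a geodesic segment from `x` to `y` by arclength on `[0, dist x y]`. -/
def IsGeodesicSegment {Z : Type*} [MetricSpace Z] (f : ℝ → Z) (x y : Z) : Prop :=
  f 0 = x ∧ f (dist x y) = y ∧
    ∀ s ∈ Set.Icc (0:ℝ) (dist x y), ∀ t ∈ Set.Icc (0:ℝ) (dist x y),
      dist (f s) (f t) = |s - t|

/-- `Z` is a geodesic metric space. -/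
def IsGeodesicSpace (Z : Type*) [MetricSpace Z] : Prop :=
  ∀ x y : Z, ∃ f : ℝ → Z, IsGeodesicSegment f x y

/-- The image of the geodesic segment `[x,y]` parametrized by `f`. -/
def segImage {Z : Type*} [MetricSpace Z] (f : ℝ → Z) (x y : Z) : Set Z :=
  f '' Set.Icc 0 (dist x y)

/-- A geodesic ray: an isometric embedding of `[0,∞)`. -/
def IsGeodesicRay {Z : Type*} [MetricSpace Z] (σ : ℝ → Z) : Prop :=
  ∀ s t : ℝ, 0 ≤ s → 0 ≤ t → dist (σ s) (σ t) = |s - t|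

/-- A bi-infinite geodesic: an isometric embedding of `ℝ`. -/
def IsBiInfGeodesic {Z : Type*} [MetricSpace Z] (γ : ℝ → Z) : Prop :=
  ∀ s t : ℝ, dist (γ s) (γ t) = |s - t|

/-- Two geodesic rays are asymptotic (same endpoint at infinity):
their images are at finite Hausdorff distance. -/
def AsymptoticRays {Z : Type*} [MetricSpace Z] (σ σ' : ℝ → Z) : Prop :=
  EMetric.hausdorffEdist (σ '' Set.Ici 0) (σ' '' Set.Ici 0) ≠ ⊤

/-- Extended Gromov product (with respect to `x`) of the two boundary points
represented by the geodesic rays `σ`, `σ'`. -/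
noncomputable def extGP {Z : Type*} [MetricSpace Z] (x : Z) (σ σ' : ℝ → Z) : EReal :=
  Filter.liminf (fun p : ℝ × ℝ => ((gromovProd x (σ p.1) (σ' p.2) : ℝ) : EReal))
    (Filter.atTop ×ˢ Filter.atTop)

/-- Extended Gromov product (with respect to `x`) of a point `y ∈ Z` and the boundary
point represented by the geodesic ray `σ`. -/
noncomputable def ptRayGP {Z : Type*} [MetricSpace Z] (x y : Z) (σ : ℝ → Z) : EReal :=
  Filter.liminf (fun t : ℝ => ((gromovProd x y (σ t) : ℝ) : EReal)) Filter.atTop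

/-- The visual quasi-metric `d_x(ξ,η) = exp(-2⟨ξ,η⟩_x)` on the Gromov boundary,
for boundary points represented by geodesic rays. -/
noncomputable def visDist {Z : Type*} [MetricSpace Z] (x : Z) (σ σ' : ℝ → Z) : ℝ :=
  if extGP x σ σ' = ⊤ then 0 else Real.exp (-2 * (extGP x σ σ').toReal)

/-- Stability of Busemann functions under change of endpoint: if two geodesic rays from
`x` have Gromov product at infinity `> r` and `y, z` are within `r − 10δ` of `x`, the
corresponding Busemann cocycles differ by at most `72δ`. -/
theorem stmt8 {Z : Type*} [MetricSpace Z] [ProperSpace Z] {δ : ℝ}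
    (hgeo : IsGeodesicSpace Z) (hhyp : IsDeltaHyperbolic Z δ)
    (x : Z) (r : ℝ) (hr : 0 < r)
    (y z : Z) (hy : dist x y < r - 10 * δ) (hz : dist x z < r - 10 * δ)
    (σ σ' : ℝ → Z) (hσ : IsGeodesicRay σ) (hσ' : IsGeodesicRay σ')
    (h0 : σ 0 = x) (h0' : σ' 0 = x)
    (hgp : (r : EReal) < extGP x σ σ')
    (b b' : ℝ)
    (hb : Filter.Tendsto (fun t => dist y (σ t) - dist z (σ t)) Filter.atTop (nhds b))
    (hb' : Filter.Tendsto (fun t => dist y (σ' t) - dist z (σ' t)) Filter.atTop (nhds b')) :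
    |b - b'| ≤ 72 * δ := by
  have hδ : 0 ≤ δ := by
    have h := hhyp x x x x
    simp [gromovProd] at h
    linarith
  have hev : ∀ᶠ p : ℝ × ℝ in atTop ×ˢ atTop,
      (r : EReal) < ((gromovProd x (σ p.1) (σ' p.2) : ℝ) : EReal) :=
    Filter.eventually_lt_of_lt_liminf hgp
  have hev2 : ∀ᶠ p : ℝ × ℝ in atTop ×ˢ atTop,
      |(dist y (σ p.1) - dist z (σ p.1)) - (dist y (σ' p.2) - dist z (σ' p.2))| ≤ 4 * δ := by
    filter_upwards [hev] with p hp
    rw [EReal.coe_lt_coe_iff] at hp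
    have key : ∀ w : Z, dist x w < r →
        |gromovProd x w (σ p.1) - gromovProd x w (σ' p.2)| ≤ δ := by
      intro w hw
      have h1 := hhyp w x (σ p.1) (σ' p.2)
      have h2 := hhyp w x (σ' p.2) (σ p.1)
      have hsym : gromovProd x (σ' p.2) (σ p.1) = gromovProd x (σ p.1) (σ' p.2) := by
        simp only [gromovProd, dist_comm (σ' p.2) (σ p.1)]; ring
      have hw1 : gromovProd x w (σ p.1) ≤ dist x w := by
        simp only [gromovProd]
        linarith [dist_triangle x w (σ p.1)]
      have hw2 : gromovProd x w (σ' p.2) ≤ dist x w := by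
        simp only [gromovProd]
        linarith [dist_triangle x w (σ' p.2)]
      have hm1 : min (gromovProd x w (σ p.1)) (gromovProd x (σ p.1) (σ' p.2))
          = gromovProd x w (σ p.1) := min_eq_left (by linarith)
      have hm2 : min (gromovProd x w (σ' p.2)) (gromovProd x (σ' p.2) (σ p.1))
          = gromovProd x w (σ' p.2) := min_eq_left (by rw [hsym]; linarith)
      rw [hm1] at h1
      rw [hm2] at h2
      rw [abs_le]
      constructor <;> linarith
    have ky := key y (by linarith)
    have kz := key z (by linarith)
    rw [abs_le] at ky kz ⊢
    simp only [gromovProd] at ky kz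
    constructor <;> [linarith [ky.1, ky.2, kz.1, kz.2]; linarith [ky.1, ky.2, kz.1, kz.2]]
  have hlim : Filter.Tendsto
      (fun p : ℝ × ℝ => (dist y (σ p.1) - dist z (σ p.1)) - (dist y (σ' p.2) - dist z (σ' p.2)))
      (atTop ×ˢ atTop) (nhds (b - b')) :=
    (hb.comp tendsto_fst).sub (hb'.comp tendsto_snd)
  have h4 : |b - b'| ≤ 4 * δ := le_of_tendsto hlim.abs hev2
  linarith
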